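/- arXiv:2505.00218 — 3 statements merged into one kernel-verified Lean document; each statement's English description precedes it below -/
import Mathlib

section
/- If a sequence δ_1, ..., δ_{L} of real numbers in (0,1) satisfies δ_l · ∏_{i=1}^{l-1} √(1 − δ_i²) = β for all l = 1,...,L, then δ_l = β / √(1 − (l−1)β²) for each l. -/
/-- Power radiation recursion: if `δ l · ∏_{i=1}^{l-1} √(1 − δ i²) = β` for all
`l = 1,…,L`, with `δ l ∈ (0,1)`, `β ∈ (0,1)` and `(L−1)β² < 1`, then
`δ l = β / √(1 − (l−1)β²)`. -/
theorem stmt_0 (L : ℕ) (hL : 1 ≤ L) (β : ℝ) (hβ : 0 < β ∧ β < 1)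
    (hβL : ((L : ℝ) - 1) * β ^ 2 < 1)
    (δ : ℕ → ℝ)
    (hδ : ∀ l ∈ Finset.Icc 1 L, 0 < δ l ∧ δ l < 1)
    (hrec : ∀ l ∈ Finset.Icc 1 L,
      δ l * ∏ i ∈ Finset.Icc 1 (l - 1), Real.sqrt (1 - δ i ^ 2) = β) :
    ∀ l ∈ Finset.Icc 1 L,
      δ l = β / Real.sqrt (1 - ((l : ℝ) - 1) * β ^ 2) := by
  obtain ⟨hβ0, hβ1⟩ := hβ
  -- positivity of 1 - (l-1)β² for l ≤ L
  have hpos : ∀ l : ℕ, l ≤ L → (0 : ℝ) < 1 - ((l : ℝ) - 1) * β ^ 2 := by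
    intro l hlL
    have h1 : ((l : ℝ) - 1) * β ^ 2 ≤ ((L : ℝ) - 1) * β ^ 2 := by
      apply mul_le_mul_of_nonneg_right _ (sq_nonneg β)
      have : (l : ℝ) ≤ L := Nat.cast_le.mpr hlL
      linarith
    linarith
  have key : ∀ l : ℕ, 1 ≤ l → l ≤ L →
      (∏ i ∈ Finset.Icc 1 (l - 1), Real.sqrt (1 - δ i ^ 2))
        = Real.sqrt (1 - ((l : ℝ) - 1) * β ^ 2) := by
    intro l hl
    induction l, hl using Nat.le_induction with
    | base =>
      intro _
      simp
    | succ n hn ih =>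
      intro hnL
      have hnL' : n ≤ L := le_trans (Nat.le_succ n) hnL
      have ihn := ih hnL'
      have hsq : (0 : ℝ) < 1 - ((n : ℝ) - 1) * β ^ 2 := hpos n hnL'
      set s := Real.sqrt (1 - ((n : ℝ) - 1) * β ^ 2) with hs
      have hs0 : 0 < s := Real.sqrt_pos.mpr hsq
      have hs2 : s ^ 2 = 1 - ((n : ℝ) - 1) * β ^ 2 := Real.sq_sqrt hsq.le
      have hmem : n ∈ Finset.Icc 1 L := Finset.mem_Icc.mpr ⟨hn, hnL'⟩
      have hrecn := hrec n hmem
      rw [ihn] at hrecn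
      have hδn : δ n = β / s := by field_simp at hrecn ⊢; linarith
      -- 1 - δ n ^ 2 = (1 - n β²)/s²
      have hnpos : (0 : ℝ) < 1 - (n : ℝ) * β ^ 2 := by
        have := hpos (n + 1) hnL
        push_cast at this
        linarith
      have h1d : 1 - δ n ^ 2 = (1 - (n : ℝ) * β ^ 2) / s ^ 2 := by
        rw [hδn, div_pow, hs2]
        rw [eq_div_iff hsq.ne', sub_mul, div_mul_cancel₀ _ hsq.ne']
        ring
      have hsplit : ∏ i ∈ Finset.Icc 1 (n + 1 - 1), Real.sqrt (1 - δ i ^ 2)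
          = (∏ i ∈ Finset.Icc 1 (n - 1), Real.sqrt (1 - δ i ^ 2))
              * Real.sqrt (1 - δ n ^ 2) := by
        have h2 : n - 1 + 1 = n := Nat.succ_pred_eq_of_pos hn
        have h3 : n + 1 - 1 = (n - 1) + 1 := by omega
        rw [h3, Finset.prod_Icc_succ_top (by omega), h2]
      rw [hsplit, ihn, h1d, Real.sqrt_div hnpos.le, Real.sqrt_sq hs0.le]
      rw [mul_div_cancel₀ _ hs0.ne']
      congr 1
      push_cast
      ring

  intro l hl
  obtain ⟨hl1, hlL⟩ := Finset.mem_Icc.mp hl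
  have hk := key l hl1 hlL
  have hr := hrec l hl
  rw [hk] at hr
  have hs0 : 0 < Real.sqrt (1 - ((l : ℝ) - 1) * β ^ 2) :=
    Real.sqrt_pos.mpr (hpos l hlL)
  rw [eq_div_iff hs0.ne']
  linarith
end

section
/- The power radiation ratio β_l = δ_l · ∏_{i=1}^{l-1} √(1 − δ_i²) with δ_l = 1/√(L − l + 1) equals 1/√L for every l = 1,...,L, so the sum of squared radiation ratios over all L antennas equals 1 (full power radiation). -/
/-- With `δ l = 1/√(L − l + 1)`, the power radiation ratio
`β l = δ l · ∏_{i=1}^{l-1} √(1 − δ i²)` equals `1/√L` for every `l = 1,…,L`,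
and the sum of squared radiation ratios equals `1` (full power radiation). -/
theorem stmt_3 (L : ℕ) (hL : 1 ≤ L)
    (δ : ℕ → ℝ)
    (hδ : ∀ l ∈ Finset.Icc 1 L,
      δ l = 1 / Real.sqrt ((L : ℝ) - (l : ℝ) + 1))
    (β : ℕ → ℝ)
    (hβ : ∀ l ∈ Finset.Icc 1 L,
      β l = δ l * ∏ i ∈ Finset.Icc 1 (l - 1), Real.sqrt (1 - δ i ^ 2)) :
    (∀ l ∈ Finset.Icc 1 L, β l = 1 / Real.sqrt L) ∧
      ∑ l ∈ Finset.Icc 1 L, β l ^ 2 = 1 := by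
  have hLpos : (0:ℝ) < L := by exact_mod_cast hL
  -- δ i ^ 2 = 1 / (L - i + 1) for i ∈ Icc 1 L
  have hδsq : ∀ i ∈ Finset.Icc 1 L, δ i ^ 2 = 1 / ((L : ℝ) - i + 1) := by
    intro i hi
    rw [hδ i hi]
    simp only [Finset.mem_Icc] at hi
    have hpos : (0:ℝ) < (L : ℝ) - i + 1 := by
      have : (i:ℝ) ≤ L := by exact_mod_cast hi.2
      linarith
    rw [div_pow, one_pow, Real.sq_sqrt hpos.le]
  -- telescoping product
  have hprod : ∀ n, n ≤ L → ∏ i ∈ Finset.Icc 1 n, (1 - δ i ^ 2) = ((L:ℝ) - n) / L := by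
    intro n hn
    induction n with
    | zero => simp [div_self hLpos.ne']
    | succ m ih =>
      have hm : m ≤ L := Nat.le_of_succ_le hn
      rw [Finset.prod_Icc_succ_top (Nat.succ_le_succ (Nat.zero_le m)), ih hm]
      have hmem : m + 1 ∈ Finset.Icc 1 L := Finset.mem_Icc.mpr ⟨Nat.succ_le_succ (Nat.zero_le m), hn⟩
      rw [hδsq _ hmem]
      have hmL : (m:ℝ) + 1 ≤ L := by exact_mod_cast hn
      have h1 : (L:ℝ) - (↑(m+1)) + 1 = (L:ℝ) - m := by push_cast; ring
      rw [h1]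
      have hpos : (0:ℝ) < (L:ℝ) - m := by linarith
      field_simp
      push_cast
      ring
  -- main per-index fact
  have key : ∀ l ∈ Finset.Icc 1 L, β l = 1 / Real.sqrt L := by
    intro l hl
    have hl' := Finset.mem_Icc.mp hl
    have hlL : (l:ℝ) ≤ L := by exact_mod_cast hl'.2
    have hpos : (0:ℝ) < (L : ℝ) - l + 1 := by linarith
    -- nonneg of factors
    have hsub : ∀ i ∈ Finset.Icc 1 (l - 1), (0:ℝ) ≤ 1 - δ i ^ 2 := by
      intro i hi
      have hi' := Finset.mem_Icc.mp hi
      have hiL : i ∈ Finset.Icc 1 L := Finset.mem_Icc.mpr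
        ⟨hi'.1, le_trans hi'.2 (Nat.le_trans (Nat.sub_le l 1) hl'.2)⟩
      rw [hδsq i hiL]
      have hiL' := Finset.mem_Icc.mp hiL
      have : (1:ℝ) ≤ (L:ℝ) - i + 1 := by
        have : (i:ℝ) ≤ L := by exact_mod_cast hiL'.2
        linarith
      have hle : 1 / ((L:ℝ) - i + 1) ≤ 1 := by
        rw [div_le_one (by linarith)]; linarith
      linarith
    have hβl := hβ l hl
    -- β l ≥ 0
    have hβnonneg : 0 ≤ β l := by
      rw [hβl, hδ l hl]
      apply mul_nonneg
      · positivity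
      · exact Finset.prod_nonneg fun i hi => Real.sqrt_nonneg _
    -- β l ^ 2 = 1 / L
    have hβsq : β l ^ 2 = 1 / L := by
      rw [hβl, mul_pow, ← Finset.prod_pow]
      have : ∏ i ∈ Finset.Icc 1 (l-1), Real.sqrt (1 - δ i ^ 2) ^ 2
          = ∏ i ∈ Finset.Icc 1 (l-1), (1 - δ i ^ 2) := by
        apply Finset.prod_congr rfl
        intro i hi
        exact Real.sq_sqrt (hsub i hi)
      rw [this, hδsq l hl]
      have hn : l - 1 ≤ L := Nat.le_trans (Nat.sub_le l 1) hl'.2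
      rw [hprod (l-1) hn]
      have hcast : ((l:ℝ) - 1) = ((l - 1 : ℕ) : ℝ) := by
        have := hl'.1
        push_cast [Nat.cast_sub this]
        ring
      have h2 : (L:ℝ) - ((l-1:ℕ):ℝ) = (L:ℝ) - l + 1 := by rw [← hcast]; ring
      rw [h2]
      field_simp
    have : β l = Real.sqrt (β l ^ 2) := by rw [Real.sqrt_sq hβnonneg]
    rw [this, hβsq, one_div, Real.sqrt_inv, one_div]
  refine ⟨key, ?_⟩
  have : ∀ l ∈ Finset.Icc 1 L, β l ^ 2 = 1 / (L:ℝ) := by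
    intro l hl
    rw [key l hl, div_pow, one_pow, Real.sq_sqrt hLpos.le]
  rw [Finset.sum_congr rfl this]
  rw [Finset.sum_const, Nat.card_Icc]
  simp only [Nat.add_sub_cancel, nsmul_eq_mul]
  field_simp
end

section
/- The McCormick relaxation gap at any feasible point is bounded by the box size: if x ∈ [x̲, x̄], y ∈ [y̲, ȳ], and z satisfies all four McCormick inequalities, then |z − x·y| ≤ (x̄ − x̲)·(ȳ − y̲)/4. -/
lemma min_prod_aux (a b c d : ℝ) (ha : 0 ≤ a) (hb : 0 ≤ b) (hc : 0 ≤ c) (hd : 0 ≤ d)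
    (h : a * b ≤ c * d) : a * b ≤ (a + c) * (b + d) / 4 := by
  nlinarith [mul_nonneg ha hb, mul_nonneg hc hd, mul_nonneg ha hd, mul_nonneg hb hc,
    sq_nonneg (a*d - b*c), mul_nonneg (mul_nonneg ha hb) (sub_nonneg.2 h),
    sq_nonneg (a*b - c*d)]

/-- McCormick relaxation gap bound: if `x ∈ [x̲, x̄]`, `y ∈ [y̲, ȳ]` and `z`
satisfies the four McCormick inequalities, then
`|z − x·y| ≤ (x̄ − x̲)·(ȳ − y̲)/4`. -/
theorem stmt_8 (xl xu yl yu x y z : ℝ)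
    (hbox : xl ≤ xu ∧ yl ≤ yu)
    (hx : xl ≤ x ∧ x ≤ xu) (hy : yl ≤ y ∧ y ≤ yu)
    (h1 : z ≥ x * yl + xl * y - xl * yl)
    (h2 : z ≥ x * yu + xu * y - xu * yu)
    (h3 : z ≤ x * yl + xu * y - yl * xu)
    (h4 : z ≤ x * yu + xl * y - yu * xl) :
    |z - x * y| ≤ (xu - xl) * (yu - yl) / 4 := by
  obtain ⟨hx1, hx2⟩ := hx
  obtain ⟨hy1, hy2⟩ := hy
  have a0 : (0:ℝ) ≤ x - xl := by linarith
  have b0 : (0:ℝ) ≤ y - yl := by linarith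
  have c0 : (0:ℝ) ≤ xu - x := by linarith
  have d0 : (0:ℝ) ≤ yu - y := by linarith
  rw [abs_le]
  constructor
  · -- xy - z ≤ min((x-xl)(y-yl), (xu-x)(yu-y))
    rcases le_total ((x - xl) * (y - yl)) ((xu - x) * (yu - y)) with h | h
    · have := min_prod_aux (x - xl) (y - yl) (xu - x) (yu - y) a0 b0 c0 d0 h
      nlinarith
    · have := min_prod_aux (xu - x) (yu - y) (x - xl) (y - yl) c0 d0 a0 b0 h
      nlinarith
  · -- z - xy ≤ min((x-xl)(yu-y), (xu-x)(y-yl))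
    rcases le_total ((x - xl) * (yu - y)) ((xu - x) * (y - yl)) with h | h
    · have := min_prod_aux (x - xl) (yu - y) (xu - x) (y - yl) a0 d0 c0 b0 h
      nlinarith
    · have := min_prod_aux (xu - x) (y - yl) (x - xl) (yu - y) c0 b0 a0 d0 h
      nlinarith
end
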